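/- In the same setting, with ε and ξ as defined, also ε ∘ ξ = id on Hom(M(X), M(Y)); hence ε is an isomorphism with inverse ξ. -/

import Mathlib

/-!  Ω is the category of nonempty finite sets ⟨s⟩ = {1,…,s} (encoded here as
`Fin (s+1)`, s : ℕ, so that every object is nonempty) with surjections as
morphisms.  An `OmegaFunctor R` is a functor Ωᵒᵖ → Mod R. -/

structure OmegaFunctor (R : Type) [CommRing R] where
  obj : ℕ → Type
  [acg : ∀ s, AddCommGroup (obj s)]
  [mod : ∀ s, Module R (obj s)]
  map : ∀ {s t : ℕ} (h : Fin (t + 1) → Fin (s + 1)),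
    Function.Surjective h → (obj s →ₗ[R] obj t)
  map_id : ∀ s : ℕ, map (s := s) id Function.surjective_id = LinearMap.id
  map_comp : ∀ {s t u : ℕ} (h : Fin (t + 1) → Fin (s + 1)) (hh : Function.Surjective h)
    (k : Fin (u + 1) → Fin (t + 1)) (hk : Function.Surjective k),
    map (h ∘ k) (hh.comp hk) = (map k hk).comp (map h hh)

attribute [instance] OmegaFunctor.acg OmegaFunctor.mod

/-- Natural transformations F → G, as a submodule of the product of the Hom modules. -/
def OmegaFunctor.Nat {R : Type} [CommRing R] (F G : OmegaFunctor R) :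
    Submodule R (∀ s : ℕ, F.obj s →ₗ[R] G.obj s) where
  carrier := {T | ∀ {s t : ℕ} (h : Fin (t + 1) → Fin (s + 1)) (hs : Function.Surjective h),
    (G.map h hs).comp (T s) = (T t).comp (F.map h hs)}
  add_mem' := by
    intro a b ha hb s t h hs
    simp only [Pi.add_apply, LinearMap.comp_add, LinearMap.add_comp, ha h hs, hb h hs]
  zero_mem' := by
    intro s t h hs
    simp
  smul_mem' := by
    intro c a ha s t h hs
    simp only [Pi.smul_apply, LinearMap.comp_smul, LinearMap.smul_comp, ha h hs]

/-- The smash-power functor `M(S)` of a pointed set `(S, pt)`: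
`M(S)(⟨s⟩)` is the free reduced `R`-module on the smash power `S^∧s`, whose basis is
the set of `s`-tuples of non-basepoint elements of `S`; a surjection `h : ⟨t⟩ → ⟨s⟩`
acts by precomposition on coordinates. -/
noncomputable def Mfun (R : Type) [CommRing R] (S : Type) (pt : S) : OmegaFunctor R where
  obj s := (Fin (s + 1) → {x : S // x ≠ pt}) →₀ R
  map h _ := Finsupp.lmapDomain R R (fun x => x ∘ h)
  map_id s := by
    exact Finsupp.lmapDomain_id R R
  map_comp h hh k hk := by
    exact Finsupp.lmapDomain_comp R R (fun x => x ∘ h) (fun x => x ∘ k)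

open scoped Classical
set_option linter.unusedSectionVars false

/-- Non-basepoint basepoint-preserving functions `(X,px) → (Y,py)`: the basis of
the free reduced `R`-module on the pointed set of pointed functions `X → Y`. -/
def PFunB (X Y : Type) (px : X) (py : Y) : Type :=
  {v : X → Y // v px = py ∧ ∃ x, v x ≠ py}

section Xi

variable (R : Type) [CommRing R] (X Y : Type) [Fintype X] [DecidableEq X]
  (px : X) (py : Y) [LinearOrder {x : X // x ≠ px}]

/-- For a nonempty `E ⊆ X ∖ {*}`, `|E| = |E| - 1 + 1`. -/
theorem card_eq (E : Finset {x : X // x ≠ px}) (hE : E.Nonempty) :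
    E.card = E.card - 1 + 1 :=
  (Nat.succ_pred_eq_of_pos (Finset.card_pos.mpr hE)).symm

/-- `κ_E = [x₁ ∧ ⋯ ∧ x_s] ∈ M(X)(⟨s⟩)` for `E = {x₁ < ⋯ < x_s} ⊆ X ∖ {*}`. -/
noncomputable def kappa (E : Finset {x : X // x ≠ px}) (hE : E.Nonempty) :
    (Mfun R X px).obj (E.card - 1) :=
  Finsupp.single (fun t => (E.orderIsoOfFin (card_eq X px E hE) t).1) 1

/-- The underlying function of `Φ_E^F [y₁ ∧ ⋯ ∧ y_s]`: it sends the `t`-th element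
of `E` to `y_t` when that element lies in `F`, and everything else to the
basepoint. -/
noncomputable def phiFun (E F : Finset {x : X // x ≠ px}) (hF : F.Nonempty)
    (hFE : F ⊆ E) (y : Fin (E.card - 1 + 1) → {y : Y // y ≠ py}) : X → Y :=
  fun x =>
    if h : ∃ hx : x ≠ px, (⟨x, hx⟩ : {x : X // x ≠ px}) ∈ F then
      (y ((E.orderIsoOfFin (card_eq X px E (hF.mono hFE))).symm
        ⟨⟨x, h.choose⟩, hFE h.choose_spec⟩)).1
    else py

theorem phiFun_pointed (E F : Finset {x : X // x ≠ px}) (hF : F.Nonempty)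
    (hFE : F ⊆ E) (y : Fin (E.card - 1 + 1) → {y : Y // y ≠ py}) :
    phiFun X Y px py E F hF hFE y px = py ∧
      ∃ x, phiFun X Y px py E F hF hFE y x ≠ py := by
  constructor
  · rw [phiFun, dif_neg]
    rintro ⟨hx, -⟩
    exact hx rfl
  · refine ⟨hF.choose.1, ?_⟩
    rw [phiFun, dif_pos ⟨hF.choose.2, by simpa using hF.choose_spec⟩]
    exact (y _).2

/-- `Φ_E^F`, extended linearly from the basis of `M(Y)(⟨|E|⟩)`. -/
noncomputable def Phi (E F : Finset {x : X // x ≠ px}) (hF : F.Nonempty)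
    (hFE : F ⊆ E) :
    (Mfun R Y py).obj (E.card - 1) →ₗ[R] (PFunB X Y px py →₀ R) :=
  Finsupp.lift _ R _
    (fun y => Finsupp.single
      (⟨phiFun X Y px py E F hF hFE y, phiFun_pointed X Y px py E F hF hFE y⟩ :
        PFunB X Y px py) 1)

/-- The Bendersky–Gitler-style map
`ξ(T) = Σ_{∅ ≠ F ⊆ E ⊆ X∖{*}} (−1)^{|E|−|F|} Φ_E^F(T_{⟨|E|⟩}(κ_E))`. -/
noncomputable def xi (T : ((Mfun R X px).Nat (Mfun R Y py))) :
    PFunB X Y px py →₀ R :=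
  ∑ E : Finset {x : X // x ≠ px}, ∑ F : Finset {x : X // x ≠ px},
    if h : F.Nonempty ∧ F ⊆ E then
      ((-1 : ℤ) ^ (E.card - F.card)) •
        (Phi R X Y px py E F h.1 h.2)
          (T.1 (E.card - 1) (kappa R X px E (h.1.mono h.2)))
    else 0

end Xi

section AuxProof

lemma aux_neg_one_pow_sub {n k : ℕ} (h : k ≤ n) :
    ((-1 : ℤ)) ^ (n - k) = (-1) ^ n * (-1) ^ k := by
  have h1 : ((-1 : ℤ)) ^ (n - k) * (-1) ^ k = (-1) ^ n := by
    rw [← pow_add, Nat.sub_add_cancel h]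
  have h2 : ((-1 : ℤ)) ^ k * (-1) ^ k = 1 := by
    rw [← pow_add]; exact Even.neg_one_pow ⟨k, rfl⟩
  calc ((-1 : ℤ)) ^ (n - k) = (-1) ^ (n - k) * ((-1) ^ k * (-1) ^ k) := by rw [h2, mul_one]
    _ = (-1) ^ n * (-1) ^ k := by rw [← mul_assoc, h1, mul_comm]
    _ = (-1) ^ n * (-1) ^ k := by ring

lemma aux_sum_sign {α : Type} [DecidableEq α] [Fintype α] (A E : Finset α) :
    (∑ F : Finset α, if A ⊆ F ∧ F ⊆ E then ((-1 : ℤ)) ^ (E.card - F.card) else 0)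
      = if E = A then 1 else 0 := by
  by_cases hAE : A ⊆ E
  · have h1 : (∑ F : Finset α, if A ⊆ F ∧ F ⊆ E then ((-1 : ℤ)) ^ (E.card - F.card) else 0)
        = ∑ G ∈ (E \ A).powerset, ((-1 : ℤ)) ^ ((E \ A).card - G.card) := by
      rw [← Finset.sum_filter]
      refine Finset.sum_nbij' (fun F => F \ A) (fun G => G ∪ A) ?_ ?_ ?_ ?_ ?_
      · intro F hF
        simp only [Finset.mem_filter] at hF
        exact Finset.mem_powerset.mpr (Finset.sdiff_subset_sdiff hF.2.2 (le_refl A))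
      · intro G hG
        simp only [Finset.mem_powerset] at hG
        refine Finset.mem_filter.mpr ⟨Finset.mem_univ _, Finset.subset_union_right, ?_⟩
        exact Finset.union_subset (hG.trans (Finset.sdiff_subset)) hAE
      · intro F hF
        simp only [Finset.mem_filter] at hF
        exact Finset.sdiff_union_of_subset hF.2.1
      · intro G hG
        simp only [Finset.mem_powerset] at hG
        exact Finset.union_sdiff_cancel_right
          ((Finset.sdiff_disjoint).mono_left hG)
      · intro F hF
        simp only [Finset.mem_filter] at hF
        show ((-1 : ℤ)) ^ (E.card - F.card) = ((-1 : ℤ)) ^ ((E \ A).card - (F \ A).card)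
        congr 1
        have hAF : A ⊆ F := hF.2.1
        have hFE : F ⊆ E := hF.2.2
        have c1 : (F \ A).card = F.card - A.card := Finset.card_sdiff_of_subset hAF
        have c2 : (E \ A).card = E.card - A.card := Finset.card_sdiff_of_subset hAE
        have c3 : A.card ≤ F.card := Finset.card_le_card hAF
        have c4 : F.card ≤ E.card := Finset.card_le_card hFE
        omega
    rw [h1]
    have h2 : ∀ G ∈ (E \ A).powerset,
        ((-1 : ℤ)) ^ ((E \ A).card - G.card) = (-1) ^ (E \ A).card * (-1) ^ G.card := by
      intro G hG
      exact aux_neg_one_pow_sub (Finset.card_le_card (Finset.mem_powerset.mp hG))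
    rw [Finset.sum_congr rfl h2, ← Finset.mul_sum, Finset.sum_powerset_neg_one_pow_card]
    by_cases hEA : E = A
    · have : E \ A = ∅ := by rw [hEA]; simp
      rw [if_pos hEA, this]
      simp
    · have : E \ A ≠ ∅ := by
        intro hc
        exact hEA (Finset.Subset.antisymm
          ((Finset.sdiff_eq_empty_iff_subset).mp hc) hAE)
      rw [if_neg hEA, if_neg this, mul_zero]
  · have hEA : E ≠ A := by rintro rfl; exact hAE (le_refl _)
    rw [if_neg hEA]
    refine Finset.sum_eq_zero fun F _ => ?_
    rw [if_neg]
    rintro ⟨h1, h2⟩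
    exact hAE (h1.trans h2)

variable (R : Type) [CommRing R] (X Y : Type) [Fintype X] [DecidableEq X]
  (px : X) (py : Y) [LinearOrder {x : X // x ≠ px}]

lemma phiFun_apply (E F : Finset {x : X // x ≠ px}) (hF : F.Nonempty) (hFE : F ⊆ E)
    (y : Fin (E.card - 1 + 1) → {y : Y // y ≠ py}) (a : {x : X // x ≠ px}) :
    phiFun X Y px py E F hF hFE y a.1 =
      if h : a ∈ F then
        (y ((E.orderIsoOfFin (card_eq X px E (hF.mono hFE))).symm ⟨a, hFE h⟩)).1
      else py := by
  by_cases h : a ∈ F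
  · have hex : ∃ hx : a.1 ≠ px, (⟨a.1, hx⟩ : {x : X // x ≠ px}) ∈ F := ⟨a.2, by simpa using h⟩
    rw [phiFun, dif_pos hex, dif_pos h]
  · rw [phiFun, dif_neg, dif_neg h]
    rintro ⟨hx, hmem⟩
    exact h (by simpa using hmem)

lemma e_phi_apply
    (e : ((PFunB X Y px py) →₀ R) →ₗ[R] ((Mfun R X px).Nat (Mfun R Y py)))
    (he : ∀ (v : PFunB X Y px py) (s : ℕ) (x : Fin (s + 1) → {a : X // a ≠ px}),
      (e (Finsupp.single v 1)).1 s (Finsupp.single x 1) =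
        if h : ∀ t, v.1 (x t).1 ≠ py then
          Finsupp.single (fun t => (⟨v.1 (x t).1, h t⟩ : {y : Y // y ≠ py})) 1
        else 0)
    (E F : Finset {x : X // x ≠ px}) (hF : F.Nonempty) (hFE : F ⊆ E)
    (s : ℕ) (x : Fin (s + 1) → {a : X // a ≠ px})
    (z : (Mfun R Y py).obj (E.card - 1)) :
    (e (Phi R X Y px py E F hF hFE z)).1 s (Finsupp.single x 1) =
      if h : ∀ t, x t ∈ F then
        Finsupp.lmapDomain R R
          (fun (y : Fin (E.card - 1 + 1) → {y : Y // y ≠ py}) =>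
            (fun t => y ((E.orderIsoOfFin (card_eq X px E (hF.mono hFE))).symm
              ⟨x t, hFE (h t)⟩))) z
      else 0 := by
  induction z using Finsupp.induction_linear with
  | zero =>
    erw [map_zero]
    split <;> rfl
  | add f g hf hg =>
    erw [map_add, map_add]
    have : (e (Phi R X Y px py E F hF hFE f) + e (Phi R X Y px py E F hF hFE g)).1 s
        (Finsupp.single x 1)
        = (e (Phi R X Y px py E F hF hFE f)).1 s (Finsupp.single x 1)
          + (e (Phi R X Y px py E F hF hFE g)).1 s (Finsupp.single x 1) := rfl
    rw [this, hf, hg]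
    split <;> [exact (map_add _ f g).symm; exact add_zero _]
  | single y c =>
    have hPhi : Phi R X Y px py E F hF hFE (Finsupp.single y c)
        = c • Finsupp.single
            (⟨phiFun X Y px py E F hF hFE y, phiFun_pointed X Y px py E F hF hFE y⟩ :
              PFunB X Y px py) 1 := by
      show (Finsupp.single y c).sum
          (fun a r => r • Finsupp.single
            (⟨phiFun X Y px py E F hF hFE a, phiFun_pointed X Y px py E F hF hFE a⟩ :
              PFunB X Y px py) 1) = _
      exact Finsupp.sum_single_index (zero_smul R _)
    erw [hPhi, map_smul]
    have hc : (c • e (Finsupp.single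
        (⟨phiFun X Y px py E F hF hFE y, phiFun_pointed X Y px py E F hF hFE y⟩ :
          PFunB X Y px py) 1)).1 s (Finsupp.single x 1)
        = c • (e (Finsupp.single
        (⟨phiFun X Y px py E F hF hFE y, phiFun_pointed X Y px py E F hF hFE y⟩ :
          PFunB X Y px py) 1)).1 s (Finsupp.single x 1) := rfl
    erw [hc, he]
    by_cases h : ∀ t, x t ∈ F
    · have hcond : ∀ t, phiFun X Y px py E F hF hFE y (x t).1 ≠ py := by
        intro t
        rw [phiFun_apply X Y px py E F hF hFE y (x t), dif_pos (h t)]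
        exact (y _).2
      rw [dif_pos hcond, dif_pos h]
      have hfun : (fun t => (⟨phiFun X Y px py E F hF hFE y (x t).1, hcond t⟩ :
          {y : Y // y ≠ py}))
          = fun t => y ((E.orderIsoOfFin (card_eq X px E (hF.mono hFE))).symm
              ⟨x t, hFE (h t)⟩) := by
        funext t
        apply Subtype.ext
        show phiFun X Y px py E F hF hFE y (x t).1
          = (y ((E.orderIsoOfFin (card_eq X px E (hF.mono hFE))).symm ⟨x t, hFE (h t)⟩)).1
        rw [phiFun_apply X Y px py E F hF hFE y (x t), dif_pos (h t)]
      rw [hfun, Finsupp.lmapDomain_apply, Finsupp.mapDomain_single]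
      exact Finsupp.smul_single_one _ c
    · have hcond : ¬ ∀ t, phiFun X Y px py E F hF hFE y (x t).1 ≠ py := by
        intro hc
        apply h
        intro t
        by_contra hmem
        apply hc t
        rw [phiFun_apply X Y px py E F hF hFE y (x t), dif_neg hmem]
      rw [dif_neg hcond, dif_neg h]
      exact (smul_zero c : c • (0 : (Fin (s + 1) → {y : Y // y ≠ py}) →₀ R) = 0)

end AuxProof

/-- from the proof of Theorem 0.6: `ε ∘ ξ = id` on
`Hom(M(X), M(Y))`; hence `ε` is an isomorphism with inverse `ξ`. -/
theorem epsilon_comp_xi (R : Type) [CommRing R] (X Y : Type)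
    [Fintype X] [DecidableEq X] (px : X) (py : Y)
    [LinearOrder {x : X // x ≠ px}]
    (e : ((PFunB X Y px py) →₀ R) →ₗ[R] ((Mfun R X px).Nat (Mfun R Y py)))
    (he : ∀ (v : PFunB X Y px py) (s : ℕ) (x : Fin (s + 1) → {a : X // a ≠ px}),
      (e (Finsupp.single v 1)).1 s (Finsupp.single x 1) =
        if h : ∀ t, v.1 (x t).1 ≠ py then
          Finsupp.single (fun t => (⟨v.1 (x t).1, h t⟩ : {y : Y // y ≠ py})) 1
        else 0) :
    ∀ T : ((Mfun R X px).Nat (Mfun R Y py)), e (xi R X Y px py T) = T := by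
  intro T
  apply Subtype.ext
  funext s
  apply Finsupp.lhom_ext
  intro x b
  have hb : (Finsupp.single x b : (Mfun R X px).obj s)
      = b • Finsupp.single x 1 := (Finsupp.smul_single_one x b).symm
  rw [hb]
  erw [map_smul, map_smul]
  congr 1
  -- main computation at the basis element `single x 1`
  set A : Finset {a : X // a ≠ px} := Finset.univ.image x with hAdef
  have hxA : ∀ t, x t ∈ A := fun t => Finset.mem_image_of_mem x (Finset.mem_univ t)
  have hAne : A.Nonempty := ⟨x 0, hxA 0⟩
  -- the evaluation linear map
  let L : ((Mfun R X px).Nat (Mfun R Y py)) →ₗ[R]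
      ((Fin (s+1) → {y : Y // y ≠ py}) →₀ R) :=
    { toFun := fun U => U.1 s (Finsupp.single x 1)
      map_add' := fun _ _ => rfl
      map_smul' := fun _ _ => rfl }
  show L (e (xi R X Y px py T)) = T.1 s (Finsupp.single x 1)
  -- the common value `D' E`
  let D : Finset {a : X // a ≠ px} → ((Fin (s+1) → {y : Y // y ≠ py}) →₀ R) :=
    fun E =>
      if hE : ∀ t, x t ∈ E then
        Finsupp.lmapDomain R R
          (fun (y : Fin (E.card - 1 + 1) → {y : Y // y ≠ py}) =>
            (fun t => y ((E.orderIsoOfFin (card_eq X px E ⟨x 0, hE 0⟩)).symm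
              ⟨x t, hE t⟩)))
          (T.1 (E.card - 1) (kappa R X px E ⟨x 0, hE 0⟩))
      else 0
  have hterm : ∀ E F : Finset {a : X // a ≠ px},
      L (e (if h : F.Nonempty ∧ F ⊆ E then
        ((-1 : ℤ) ^ (E.card - F.card)) •
          (Phi R X Y px py E F h.1 h.2)
            (T.1 (E.card - 1) (kappa R X px E (h.1.mono h.2)))
      else 0))
      = (if A ⊆ F ∧ F ⊆ E then ((-1 : ℤ)) ^ (E.card - F.card) else 0) • D E := by
    intro E F
    by_cases h1 : F.Nonempty ∧ F ⊆ E
    · rw [dif_pos h1, map_zsmul, map_zsmul]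
      have hL : L (e ((Phi R X Y px py E F h1.1 h1.2)
          (T.1 (E.card - 1) (kappa R X px E (h1.1.mono h1.2)))))
          = (e ((Phi R X Y px py E F h1.1 h1.2)
          (T.1 (E.card - 1) (kappa R X px E (h1.1.mono h1.2))))).1 s
            (Finsupp.single x 1) := rfl
      rw [hL, e_phi_apply R X Y px py e he E F h1.1 h1.2 s x]
      by_cases h2 : ∀ t, x t ∈ F
      · have hAF : A ⊆ F := by
          rw [hAdef]
          exact Finset.image_subset_iff.mpr fun t _ => h2 t
        rw [dif_pos h2, if_pos ⟨hAF, h1.2⟩]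
        congr 1
        have hE : ∀ t, x t ∈ E := fun t => h1.2 (h2 t)
        show _ = D E
        rw [show D E = _ from dif_pos hE]
      · have hAF : ¬ (A ⊆ F ∧ F ⊆ E) := by
          rintro ⟨hs, -⟩
          exact h2 fun t => hs (hxA t)
        rw [dif_neg h2, if_neg hAF, smul_zero, zero_smul]
    · rw [dif_neg h1, map_zero, map_zero]
      have : ¬ (A ⊆ F ∧ F ⊆ E) := by
        rintro ⟨hs, hFE⟩
        exact h1 ⟨hAne.mono hs, hFE⟩
      rw [if_neg this, zero_smul]
  have hsum : L (e (xi R X Y px py T))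
      = ∑ E : Finset {a : X // a ≠ px}, ∑ F : Finset {a : X // a ≠ px},
          (if A ⊆ F ∧ F ⊆ E then ((-1 : ℤ)) ^ (E.card - F.card) else 0) • D E := by
    rw [xi, map_sum, map_sum]
    refine Finset.sum_congr rfl fun E _ => ?_
    rw [map_sum, map_sum]
    exact Finset.sum_congr rfl fun F _ => hterm E F
  rw [hsum]
  have hsum2 : ∀ E : Finset {a : X // a ≠ px},
      (∑ F : Finset {a : X // a ≠ px},
        (if A ⊆ F ∧ F ⊆ E then ((-1 : ℤ)) ^ (E.card - F.card) else 0) • D E)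
      = (if E = A then (1 : ℤ) else 0) • D E := by
    intro E
    rw [← Finset.sum_smul, aux_sum_sign]
  rw [Finset.sum_congr rfl fun E _ => hsum2 E]
  have hsum3 : (∑ E : Finset {a : X // a ≠ px},
      (if E = A then (1 : ℤ) else 0) • D E) = D A := by
    rw [Finset.sum_eq_single A]
    · rw [if_pos rfl, one_smul]
    · intro E _ hne
      rw [if_neg hne, zero_smul]
    · intro h
      exact absurd (Finset.mem_univ A) h
  rw [hsum3]
  -- now identify `D A` with `T.1 s (single x 1)` via naturality
  let g : Fin (s + 1) → Fin (A.card - 1 + 1) :=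
    fun t => (A.orderIsoOfFin (card_eq X px A ⟨x 0, hxA 0⟩)).symm ⟨x t, hxA t⟩
  have hgsurj : Function.Surjective g := by
    intro j
    obtain ⟨t, -, ht⟩ := Finset.mem_image.mp
      (((A.orderIsoOfFin (card_eq X px A ⟨x 0, hxA 0⟩)) j).2)
    refine ⟨t, ?_⟩
    have : (⟨x t, hxA t⟩ : {a : {a : X // a ≠ px} // a ∈ A})
        = (A.orderIsoOfFin (card_eq X px A ⟨x 0, hxA 0⟩)) j := Subtype.ext ht
    show (A.orderIsoOfFin (card_eq X px A ⟨x 0, hxA 0⟩)).symm ⟨x t, hxA t⟩ = j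
    rw [this, OrderIso.symm_apply_apply]
  have hnat := T.2 (s := A.card - 1) (t := s) g hgsurj
  have hnat' := congrArg
    (fun (Lm : (Mfun R X px).obj (A.card - 1) →ₗ[R] (Mfun R Y py).obj s) =>
      Lm (kappa R X px A ⟨x 0, hxA 0⟩)) hnat
  simp only [LinearMap.comp_apply] at hnat'
  have hDA : D A = ((Mfun R Y py).map g hgsurj)
      (T.1 (A.card - 1) (kappa R X px A ⟨x 0, hxA 0⟩)) := by
    rw [show D A = _ from dif_pos hxA]
    rfl
  have hmapx : ((Mfun R X px).map g hgsurj) (kappa R X px A ⟨x 0, hxA 0⟩)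
      = Finsupp.single x 1 := by
    show Finsupp.lmapDomain R R (fun v => v ∘ g) (kappa R X px A ⟨x 0, hxA 0⟩)
      = Finsupp.single x 1
    unfold kappa
    erw [Finsupp.lmapDomain_apply, Finsupp.mapDomain_single]
    congr 1
    funext t
    show ((A.orderIsoOfFin (card_eq X px A ⟨x 0, hxA 0⟩)) (g t)).1 = x t
    rw [show g t = _ from rfl, OrderIso.apply_symm_apply]
  rw [hDA, hnat', hmapx]
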